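/- Let d ≥ 2, let G be a d-regular tree, let v be a vertex of G, and let n ≥ 0. The number of closed walks of length 2n in G starting and ending at v equals ∑_{k=0}^{n} (binom(2n, k) - binom(2n, k-1)) · (d-1)^k, where binom(2n, -1) = 0. -/

import Mathlib

open SimpleGraph Finset

private def aCoef (L j : ℕ) : ℤ :=
  (L.choose j : ℤ) - if j = 0 then 0 else (L.choose (j - 1) : ℤ)

private def Fq (x : ℤ) (L m : ℕ) : ℤ :=
  if m ≤ L ∧ L % 2 = m % 2 then ∑ j ∈ range ((L - m) / 2 + 1), aCoef L j * x ^ j else 0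

private lemma aCoef_pascal (L j : ℕ) :
    aCoef (L + 1) j = aCoef L j + (if j = 0 then 0 else aCoef L (j - 1)) := by
  rcases j with _ | j
  · simp [aCoef]
  · simp only [aCoef, if_neg (Nat.succ_ne_zero _), Nat.add_sub_cancel]
    rcases j with _ | j
    · simp [Nat.choose_one_right, Nat.choose_succ_succ]
    · rw [Nat.choose_succ_succ L (j + 1), Nat.choose_succ_succ L j]
      simp only [if_neg (Nat.succ_ne_zero _), Nat.add_sub_cancel]
      push_cast
      ring

private lemma aCoef_half (t : ℕ) : aCoef (2 * t + 1) (t + 1) = 0 := by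
  simp only [aCoef, if_neg (Nat.succ_ne_zero _), Nat.add_sub_cancel, sub_eq_zero]
  norm_cast
  rw [← Nat.choose_symm (by omega : t + 1 ≤ 2 * t + 1), show 2 * t + 1 - (t + 1) = t by omega]

private lemma expand_aux (x : ℤ) (L : ℕ) : ∀ j, aCoef (L + 1) j * x ^ j
    = aCoef L j * x ^ j + (if j = 0 then 0 else aCoef L (j - 1) * x ^ j) := by
  intro j
  rw [aCoef_pascal, add_mul, ite_mul, zero_mul]

private lemma Fq_succ_zero (x : ℤ) (L : ℕ) : Fq x (L + 1) 0 = (x + 1) * Fq x L 1 := by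
  rcases Nat.even_or_odd L with hL | hL
  · obtain ⟨r, rfl⟩ := hL
    have h1 : ¬ ((r + r + 1) % 2 = 0 % 2) := by omega
    by_cases hL1 : 1 ≤ r + r
    · have h2 : ¬ ((r + r) % 2 = 1 % 2) := by omega
      simp [Fq, h1, h2]
    · simp [Fq, h1, show ¬ (1 ≤ r + r) from hL1]
  · obtain ⟨t, rfl⟩ := hL
    have h1 : (2 * t + 1 + 1) % 2 = 0 % 2 := by omega
    have h2 : (2 * t + 1) % 2 = 1 % 2 := by omega
    rw [Fq, if_pos ⟨Nat.zero_le _, h1⟩, Fq, if_pos ⟨by omega, h2⟩]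
    rw [show (2 * t + 1 + 1 - 0) / 2 = t + 1 by omega, show (2 * t + 1 - 1) / 2 = t by omega]
    rw [Finset.sum_congr rfl fun j _ => expand_aux x (2 * t + 1) j, Finset.sum_add_distrib]
    rw [Finset.sum_range_succ' (fun j => if j = 0 then 0 else aCoef (2*t+1) (j-1) * x ^ j) (t+1)]
    simp only [Nat.add_sub_cancel, if_neg (Nat.succ_ne_zero _), if_true, add_zero]
    rw [Finset.sum_range_succ (fun j => aCoef (2 * t + 1) j * x ^ j) (t + 1)]
    rw [aCoef_half, zero_mul, add_zero, ← Finset.sum_add_distrib]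
    rw [Finset.mul_sum]
    exact Finset.sum_congr rfl fun j _ => by ring

private lemma Fq_succ (x : ℤ) (L m : ℕ) (hm : m ≠ 0) :
    Fq x (L + 1) m = Fq x L (m - 1) + x * Fq x L (m + 1) := by
  by_cases hp : (L + 1) % 2 = m % 2
  · have hp1 : L % 2 = (m - 1) % 2 := by omega
    have hp2 : L % 2 = (m + 1) % 2 := by omega
    by_cases hb : m ≤ L + 1
    · rcases eq_or_lt_of_le hb with hEq | hlt
      · have h2 : ¬ (m + 1 ≤ L) := by omega
        rw [Fq, if_pos ⟨hb, hp⟩, Fq, if_pos ⟨by omega, hp1⟩, Fq, if_neg (by tauto)]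
        rw [show (L + 1 - m) / 2 = 0 by omega, show (L - (m - 1)) / 2 = 0 by omega]
        simp [aCoef]
      · have hmL : m + 1 ≤ L := by omega
        rw [Fq, if_pos ⟨hb, hp⟩, Fq, if_pos ⟨by omega, hp1⟩, Fq, if_pos ⟨hmL, hp2⟩]
        obtain ⟨K, hK⟩ : ∃ K, L - (m + 1) = 2 * K := ⟨(L - (m+1))/2, by omega⟩
        rw [show (L + 1 - m) / 2 = K + 1 by omega, show (L - (m - 1)) / 2 = K + 1 by omega,
          show (L - (m + 1)) / 2 = K by omega]
        rw [Finset.sum_congr rfl fun j _ => expand_aux x L j, Finset.sum_add_distrib]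
        congr 1
        rw [Finset.sum_range_succ' (fun j => if j = 0 then 0 else aCoef L (j-1) * x ^ j) (K+1)]
        simp only [Nat.add_sub_cancel, if_neg (Nat.succ_ne_zero _), if_true, add_zero]
        rw [Finset.mul_sum]
        exact Finset.sum_congr rfl fun j _ => by ring
    · have h1 : ¬ (m - 1 ≤ L) := by omega
      rw [Fq, if_neg (by tauto), Fq, if_neg (by tauto), Fq,
        if_neg (by intro h; exact absurd h.1 (by omega))]
      ring
  · have h1 : ¬ (L % 2 = (m - 1) % 2) := by omega
    have h2 : ¬ (L % 2 = (m + 1) % 2) := by omega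
    rw [Fq, if_neg (by tauto), Fq, if_neg (by tauto), Fq, if_neg (by tauto)]
    ring

private lemma Fq_zero (x : ℤ) (m : ℕ) : Fq x 0 m = if m = 0 then 1 else 0 := by
  rcases Nat.eq_zero_or_pos m with rfl | hm
  · simp [Fq, aCoef]
  · rw [Fq, if_neg (by omega), if_neg (by omega)]


private lemma adj_dist_aux {V : Type*} {G : SimpleGraph V} (hconn : G.Connected)
    (hacyc : G.IsAcyclic) {u u' v : V} (h : G.Adj u u') :
    G.dist u' v + 1 = G.dist u v ∨ G.dist u v + 1 = G.dist u' v := by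
  classical
  have h1 : G.dist u v ≤ G.dist u' v + 1 := by
    obtain ⟨p, hp⟩ := hconn.exists_walk_length_eq_dist u' v
    simpa [hp] using SimpleGraph.dist_le (Walk.cons h p)
  have h2 : G.dist u' v ≤ G.dist u v + 1 := by
    obtain ⟨p, hp⟩ := hconn.exists_walk_length_eq_dist u v
    simpa [hp] using SimpleGraph.dist_le (Walk.cons h.symm p)
  have hne : G.dist u v ≠ G.dist u' v := by
    intro hEq
    obtain ⟨p, hp, hlp⟩ := hconn.exists_path_of_dist u v
    obtain ⟨p', hp', hlp'⟩ := hconn.exists_path_of_dist u' v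
    by_cases hu : u ∈ p'.support
    · have hspec := p'.take_spec hu
      have hlen : (p'.takeUntil u hu).length + (p'.dropUntil u hu).length = p'.length := by
        rw [← SimpleGraph.Walk.length_append, hspec]
      have h3 : G.dist u' u ≤ (p'.takeUntil u hu).length := SimpleGraph.dist_le _
      have h5 : G.dist u' u = 1 := SimpleGraph.dist_eq_one_iff_adj.mpr h.symm
      have h4 : G.dist u v ≤ (p'.dropUntil u hu).length := SimpleGraph.dist_le _
      omega
    · have hq : (SimpleGraph.Walk.cons h p').IsPath := hp'.cons hu
      have heq2 := hacyc.path_unique ⟨p, hp⟩ ⟨SimpleGraph.Walk.cons h p', hq⟩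
      have := congrArg (fun q => q.1.length) heq2
      simp only [SimpleGraph.Walk.length_cons] at this
      omega
  omega

private lemma exists_unique_down {V : Type*} {G : SimpleGraph V} (hconn : G.Connected)
    (hacyc : G.IsAcyclic) {u v : V} (huv : u ≠ v) :
    ∃! u' : V, G.Adj u u' ∧ G.dist u' v + 1 = G.dist u v := by
  classical
  have ht : 0 < G.dist u v := hconn.pos_dist_of_ne huv
  obtain ⟨p, hp, hlp⟩ := hconn.exists_path_of_dist u v
  -- p nonempty
  cases p with
  | nil => simp at ht
  | cons hadj q =>
    rename_i w
    refine ⟨w, ⟨hadj, ?_⟩, ?_⟩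
    · have hle : G.dist w v ≤ q.length := SimpleGraph.dist_le q
      have hq : q.length + 1 = G.dist u v := by
        simpa [SimpleGraph.Walk.length_cons] using hlp
      rcases adj_dist_aux hconn hacyc (v := v) hadj with hh | hh
      · omega
      · omega
    · rintro b ⟨hb, hbd⟩
      -- both give shortest paths; uniqueness of paths
      obtain ⟨qb, hqb, hlqb⟩ := hconn.exists_path_of_dist b v
      have hwalkb : (SimpleGraph.Walk.cons hb qb).length = G.dist u v := by
        simp [SimpleGraph.Walk.length_cons, hlqb]; omega
      have hpathb : (SimpleGraph.Walk.cons hb qb).IsPath :=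
        SimpleGraph.Walk.isPath_of_length_eq_dist _ hwalkb
      have heq2 := hacyc.path_unique ⟨SimpleGraph.Walk.cons hb qb, hpathb⟩
        ⟨SimpleGraph.Walk.cons hadj q, hp⟩
      have := congrArg (fun r => r.1.getVert 1) heq2
      simpa [SimpleGraph.Walk.getVert_cons_succ, SimpleGraph.Walk.getVert_zero] using this


section
variable {V : Type*} {G : SimpleGraph V}

private lemma card_walk_eq [∀ w : V, Fintype (G.neighborSet w)]
    (hconn : G.Connected) (hacyc : G.IsAcyclic) {d : ℕ} (hd : 2 ≤ d)
    (hreg : ∀ w : V, G.degree w = d) (v : V) :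
    ∀ (L : ℕ) (u : V), (Nat.card {p : G.Walk u v // p.length = L} : ℤ)
      = Fq ((d : ℤ) - 1) L (G.dist u v) := by
  classical
  intro L
  induction L with
  | zero =>
    intro u
    by_cases huv : u = v
    · subst huv
      have huniq : ∀ (p : G.Walk u u), p.length = 0 → p = Walk.nil := by
        intro p hp
        cases p with
        | nil => rfl
        | cons h q => simp at hp
      have hcard : Nat.card {p : G.Walk u u // p.length = 0} = 1 := by
        rw [Nat.card_eq_one_iff_unique]
        exact ⟨⟨fun a b => Subtype.ext (by rw [huniq a.1 a.2, huniq b.1 b.2])⟩,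
          ⟨⟨Walk.nil, rfl⟩⟩⟩
      rw [hcard, SimpleGraph.dist_self, Fq_zero]
      simp
    · haveI : IsEmpty {p : G.Walk u v // p.length = 0} :=
        ⟨fun p => huv (Walk.eq_of_length_eq_zero p.2)⟩
      rw [Nat.card_of_isEmpty, Fq_zero,
        if_neg (fun h0 => huv (hconn.dist_eq_zero_iff.mp h0))]
      simp
  | succ L ih =>
    intro u
    haveI : ∀ (w : V) (Lx : ℕ), Fintype {q : G.Walk w v // q.length = Lx} := fun w Lx =>
      G.fintypeSubtypeWalkLength w v Lx
    have equiv1 : (Σ w : G.neighborSet u, {q : G.Walk (w : V) v // q.length = L}) ≃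
        {p : G.Walk u v // p.length = L + 1} := by
      refine Equiv.ofBijective (fun s => ⟨Walk.cons ((G.mem_neighborSet u _).mp s.1.2) s.2.1, by simp [s.2.2]⟩) ⟨?_, ?_⟩
      · rintro ⟨⟨w1, h1⟩, ⟨q1, e1⟩⟩ ⟨⟨w2, h2⟩, ⟨q2, e2⟩⟩ hEq
        simp only [Subtype.mk.injEq] at hEq
        have hw : w1 = w2 := by
          have := congrArg (fun r => r.getVert 1) hEq
          simpa [Walk.getVert_cons_succ, Walk.getVert_zero] using this
        subst hw
        have hq : q1 = q2 := by
          have := (Walk.cons.injEq _ _ _ _ _).mp hEq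
          exact eq_of_heq this.2
        subst hq
        rfl
      · rintro ⟨p, hp⟩
        cases p with
        | nil => simp at hp
        | cons hadj q =>
          exact ⟨⟨⟨_, hadj⟩, ⟨q, by simpa using hp⟩⟩, rfl⟩
    rw [← Nat.card_congr equiv1, Nat.card_eq_fintype_card, Fintype.card_sigma]
    push_cast
    have hterm : ∀ w : G.neighborSet u,
        ((Fintype.card {q : G.Walk (w : V) v // q.length = L} : ℤ))
          = Fq ((d : ℤ) - 1) L (G.dist (w : V) v) := by
      intro w
      rw [← Nat.card_eq_fintype_card]
      exact ih w
    rw [Finset.sum_congr rfl fun w _ => hterm w]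
    have hsum : ∑ w : G.neighborSet u, Fq ((d : ℤ) - 1) L (G.dist (w : V) v)
        = ∑ w ∈ G.neighborFinset u, Fq ((d : ℤ) - 1) L (G.dist w v) := by
      rw [SimpleGraph.neighborFinset_def]
      exact Finset.sum_set_coe (f := fun w => Fq ((d : ℤ) - 1) L (G.dist w v)) _
    rw [hsum]
    by_cases huv : u = v
    · subst huv
      have hall : ∀ w ∈ G.neighborFinset u, Fq ((d : ℤ) - 1) L (G.dist w u)
          = Fq ((d : ℤ) - 1) L 1 := by
        intro w hw
        rw [SimpleGraph.mem_neighborFinset] at hw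
        rcases adj_dist_aux hconn hacyc (v := u) hw with hh | hh
        · rw [SimpleGraph.dist_self] at hh; omega
        · rw [SimpleGraph.dist_self] at hh
          rw [← hh]
      rw [Finset.sum_congr rfl hall, Finset.sum_const, SimpleGraph.dist_self,
        Fq_succ_zero, card_neighborFinset_eq_degree, hreg]
      ring
    · set t := G.dist u v with ht
      have ht1 : 1 ≤ t := hconn.pos_dist_of_ne huv
      rw [← Finset.sum_filter_add_sum_filter_not (G.neighborFinset u)
        (fun w => G.dist w v + 1 = t)]
      have hcard1 : ((G.neighborFinset u).filter (fun w => G.dist w v + 1 = t)).card = 1 := by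
        obtain ⟨a, ⟨ha1, ha2⟩, hau⟩ := exists_unique_down hconn hacyc (v := v) huv
        rw [Finset.card_eq_one]
        refine ⟨a, ?_⟩
        ext w
        simp only [Finset.mem_filter, SimpleGraph.mem_neighborFinset, Finset.mem_singleton]
        constructor
        · rintro ⟨hw1, hw2⟩; exact hau w ⟨hw1, hw2⟩
        · rintro rfl; exact ⟨ha1, ha2⟩
      have hval1 : ∀ w ∈ (G.neighborFinset u).filter (fun w => G.dist w v + 1 = t),
          Fq ((d : ℤ) - 1) L (G.dist w v) = Fq ((d : ℤ) - 1) L (t - 1) := by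
        intro w hw
        rw [Finset.mem_filter] at hw
        congr 1
        omega
      have hval2 : ∀ w ∈ (G.neighborFinset u).filter (fun w => ¬ (G.dist w v + 1 = t)),
          Fq ((d : ℤ) - 1) L (G.dist w v) = Fq ((d : ℤ) - 1) L (t + 1) := by
        intro w hw
        rw [Finset.mem_filter, SimpleGraph.mem_neighborFinset] at hw
        rcases adj_dist_aux hconn hacyc (v := v) hw.1 with hh | hh
        · exact absurd hh hw.2
        · rw [← hh]
      have hcard2 : ((G.neighborFinset u).filter (fun w => ¬ (G.dist w v + 1 = t))).card
          = d - 1 := by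
        have := Finset.card_filter_add_card_filter_not
          (s := G.neighborFinset u) (p := fun w => G.dist w v + 1 = t)
        rw [card_neighborFinset_eq_degree, hreg] at this
        omega
      rw [Finset.sum_congr rfl hval1, Finset.sum_congr rfl hval2, Finset.sum_const,
        Finset.sum_const, hcard1, hcard2, Fq_succ _ _ _ (by omega)]
      have : ((d - 1 : ℕ) : ℤ) = (d : ℤ) - 1 := by
        have : 1 ≤ d := by omega
        push_cast [this]
        ring
      simp [this]

end



/-- On a `d`-regular tree, the number of closed walks of length `2n` at a vertex `v`
equals `∑_{k=0}^{n} (binom(2n,k) - binom(2n,k-1)) * (d-1)^k`, with the convention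
`binom(2n,-1) = 0`. -/
theorem stmt_3 (d : ℕ) (hd : 2 ≤ d) {V : Type*} (G : SimpleGraph V)
    [∀ w : V, Fintype (G.neighborSet w)]
    (hconn : G.Connected) (hacyc : G.IsAcyclic)
    (hreg : ∀ w : V, G.degree w = d)
    (v : V) (n : ℕ) :
    (Nat.card {p : G.Walk v v // p.length = 2 * n} : ℤ) =
      ∑ k ∈ Finset.range (n + 1),
        (((2 * n).choose k : ℤ) - if k = 0 then 0 else ((2 * n).choose (k - 1) : ℤ)) *
          ((d : ℤ) - 1) ^ k := by
  rw [card_walk_eq hconn hacyc hd hreg v (2 * n) v, SimpleGraph.dist_self,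
    Fq, if_pos ⟨Nat.zero_le _, by omega⟩, show (2 * n - 0) / 2 = n by omega]
  rfl
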